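/- Let 𝒜 ⊆ [0,1] be a set of real numbers satisfying the descending chain condition (every nonincreasing sequence in 𝒜 is eventually constant) with all elements positive, and let c > 0 be a real number. Then there are only finitely many finite multisets {a₁,…,aₖ} of elements of 𝒜 with a₁ + ⋯ + aₖ = c. -/

import Mathlib

/-- A set of reals satisfies the descending chain condition if every
nonincreasing sequence of its elements is eventually constant. -/
def DCC (A : Set ℝ) : Prop :=
  ∀ f : ℕ → ℝ, (∀ n, f n ∈ A) → Antitone f → ∃ N, ∀ n, N ≤ n → f n = f N

/-- Pointwise `≤` lists with equal sums are equal. -/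
lemma forall2_le_sum_eq {l₁ l₂ : List ℝ} (h : List.Forall₂ (· ≤ ·) l₁ l₂)
    (hs : l₁.sum = l₂.sum) : l₁ = l₂ := by
  induction h with
  | nil => rfl
  | cons hab h ih =>
      simp only [List.sum_cons] at hs
      have hsum := List.Forall₂.sum_le_sum h
      have h1 : _ = _ := le_antisymm hab (by linarith)
      have h2 : _ = _ := le_antisymm hsum (by linarith [h1])
      rw [h1, ih h2]

/-- A sublist of a list of positive reals with the same sum is the whole list. -/
lemma sublist_sum_eq {l₁ l₂ : List ℝ} (h : l₁.Sublist l₂)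
    (hpos : ∀ a ∈ l₂, 0 < a) (hs : l₁.sum = l₂.sum) : l₁ = l₂ := by
  induction h with
  | slnil => rfl
  | cons a h ih =>
      exfalso
      have h1 : List.sum _ ≤ List.sum _ :=
        List.Sublist.sum_le_sum h (fun b hb => (hpos b (List.mem_cons_of_mem a hb)).le)
      have ha : 0 < a := hpos a List.mem_cons_self
      rw [List.sum_cons] at hs
      linarith
  | cons_cons a h ih =>
      rw [List.sum_cons, List.sum_cons, ] at hs
      have hs := add_left_cancel hs
      rw [ih (fun b hb => hpos b (List.mem_cons_of_mem a hb)) hs]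

/-- There are only finitely many finite multisets of elements of a DCC set
`A ⊆ [0,1]` of positive reals whose sum is a fixed positive constant `c`. -/
theorem finitely_many_multisets_with_fixed_sum
    (A : Set ℝ) (hA : A ⊆ Set.Icc 0 1) (hDCC : DCC A)
    (hpos : ∀ a ∈ A, 0 < a) (c : ℝ) (hc : 0 < c) :
    {s : Multiset ℝ | (∀ a ∈ s, a ∈ A) ∧ s.sum = c}.Finite := by
  -- A is well-founded under <, hence partially well-ordered under ≤.
  have hWF : A.IsWF := by
    rw [Set.isWF_iff_no_descending_seq]
    intro f hf hmem
    obtain ⟨N, hN⟩ := hDCC f hmem hf.antitone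
    exact absurd (hN (N + 1) (Nat.le_succ N)) (hf (Nat.lt_succ_self N)).ne
  have hPWO : A.IsPWO := hWF.isPWO
  -- Higman's lemma
  have hH := Set.PartiallyWellOrderedOn.partiallyWellOrderedOn_sublistForall₂
    (r := ((· ≤ ·) : ℝ → ℝ → Prop)) hPWO
  by_contra hinf
  rw [← Set.Infinite] at hinf
  obtain ⟨e⟩ : Nonempty (ℕ ↪ {s : Multiset ℝ | (∀ a ∈ s, a ∈ A) ∧ s.sum = c}) :=
    ⟨hinf.natEmbedding _⟩
  set l : ℕ → List ℝ := fun n => ((e n : Multiset ℝ)).toList with hl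
  have hmem : ∀ n, ∀ x ∈ l n, x ∈ A := by
    intro n x hx
    exact (e n).2.1 x (Multiset.mem_toList.1 hx)
  have hsum : ∀ n, (l n).sum = c := by
    intro n
    have h := (e n).2.2
    rwa [← Multiset.sum_toList] at h
  obtain ⟨m, n, hmn, hrel⟩ := hH (fun n => ⟨l n, hmem n⟩)
  obtain ⟨l', hall, hsub⟩ := List.sublistForall₂_iff.1 hrel
  have hpos' : ∀ a ∈ l n, 0 < a := fun a ha => hpos a (hmem n a ha)
  have h1 : (l m).sum ≤ l'.sum := List.Forall₂.sum_le_sum hall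
  have h2 : l'.sum ≤ (l n).sum :=
    List.Sublist.sum_le_sum hsub (fun a ha => (hpos' a ha).le)
  have hs1 : (l m).sum = l'.sum := le_antisymm h1 (by rw [hsum m, ← hsum n]; exact h2)
  have hs2 : l'.sum = (l n).sum := by rw [← hs1, hsum m, hsum n]
  have : l m = l n := (forall2_le_sum_eq hall hs1).trans (sublist_sum_eq hsub hpos' hs2)
  have hmeq : (e m : Multiset ℝ) = (e n : Multiset ℝ) := by
    rw [← Multiset.coe_toList (e m : Multiset ℝ), ← Multiset.coe_toList (e n : Multiset ℝ)]
    exact congrArg _ this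
  exact absurd (e.injective (Subtype.ext hmeq)) hmn.ne
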